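/- Let A, B, C, D ∈ ℝ² with no three collinear, and let M be a point lying both on the line through A, C and on the line through B, D (a diagonal point of the quadrangle ABCD). Let ℓ be a line through M containing none of A, B, C, D. Let X be the intersection point of the line through A, B with ℓ and Y the intersection point of the line through C, D with ℓ, and suppose X ≠ Y and M = (X + Y)/2. Then every conic through A, B, C, D meets ℓ either in the empty set, or exactly in {M}, or exactly in a pair of distinct points whose midpoint is M. -/

import Mathlib

/-- A conic (possibly degenerate) in the affine plane `ℝ × ℝ`, given by the six
coefficients of a polynomial `a·x² + b·x·y + c·y² + d·x + e·y + g`. -/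
structure Conic where
  a : ℝ
  b : ℝ
  c : ℝ
  d : ℝ
  e : ℝ
  g : ℝ

/-- Evaluation of the defining polynomial of a conic at a point of `ℝ × ℝ`. -/
def Conic.eval (f : Conic) (p : ℝ × ℝ) : ℝ :=
  f.a * p.1 ^ 2 + f.b * p.1 * p.2 + f.c * p.2 ^ 2 + f.d * p.1 + f.e * p.2 + f.g

/-- The defining polynomial is nonzero. -/
def Conic.Nonzero (f : Conic) : Prop :=
  ¬ (f.a = 0 ∧ f.b = 0 ∧ f.c = 0 ∧ f.d = 0 ∧ f.e = 0 ∧ f.g = 0)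

/-- The conic passes through the four points `A`, `B`, `C`, `D`. -/
def Conic.Through (f : Conic) (A B C D : ℝ × ℝ) : Prop :=
  f.eval A = 0 ∧ f.eval B = 0 ∧ f.eval C = 0 ∧ f.eval D = 0

/-- No three of the four points `A`, `B`, `C`, `D` are collinear. -/
def NoThreeCollinear (A B C D : ℝ × ℝ) : Prop :=
  ¬ Collinear ℝ ({A, B, C} : Set (ℝ × ℝ)) ∧ ¬ Collinear ℝ ({A, B, D} : Set (ℝ × ℝ)) ∧
  ¬ Collinear ℝ ({A, C, D} : Set (ℝ × ℝ)) ∧ ¬ Collinear ℝ ({B, C, D} : Set (ℝ × ℝ))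

/-- The line through `M` with direction `u`. -/
def parmLine (M u : ℝ × ℝ) : Set (ℝ × ℝ) :=
  {p | ∃ t : ℝ, p = M + t • u}

namespace Butterfly

def cross (v w : ℝ × ℝ) : ℝ := v.1 * w.2 - v.2 * w.1

def qc (f : Conic) (v : ℝ × ℝ) : ℝ := f.a * v.1 ^ 2 + f.b * v.1 * v.2 + f.c * v.2 ^ 2

def lc (f : Conic) (P v : ℝ × ℝ) : ℝ :=
  2 * f.a * P.1 * v.1 + f.b * (P.1 * v.2 + P.2 * v.1) + 2 * f.c * P.2 * v.2 + f.d * v.1 + f.e * v.2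

def mc (f : Conic) (w v : ℝ × ℝ) : ℝ :=
  2 * f.a * w.1 * v.1 + f.b * (w.1 * v.2 + w.2 * v.1) + 2 * f.c * w.2 * v.2

lemma evalLine (f : Conic) (P v : ℝ × ℝ) (t : ℝ) :
    f.eval (P + t • v) = qc f v * t ^ 2 + lc f P v * t + f.eval P := by
  simp [Conic.eval, qc, lc, Prod.smul_def, smul_eq_mul]
  ring

lemma evalPlane (f : Conic) (P w v : ℝ × ℝ) (s t : ℝ) :
    f.eval (P + s • w + t • v) = qc f w * s ^ 2 + mc f w v * s * t + qc f v * t ^ 2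
      + lc f P w * s + lc f P v * t + f.eval P := by
  simp [Conic.eval, qc, lc, mc, Prod.smul_def, smul_eq_mul]
  ring

lemma smul_of_cross {v w : ℝ × ℝ} (hv : v ≠ 0) (h : cross v w = 0) : ∃ c : ℝ, w = c • v := by
  unfold cross at h
  by_cases h1 : v.1 = 0
  · have h2 : v.2 ≠ 0 := fun h2 => hv (Prod.ext h1 h2)
    refine ⟨w.2 / v.2, Prod.ext ?_ ?_⟩ <;> simp [Prod.smul_def, smul_eq_mul, h1]
    · have hz : v.2 * w.1 = 0 := by rw [h1] at h; linarith
      rcases mul_eq_zero.mp hz with h' | h'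
      · exact absurd h' h2
      · exact h'
    · field_simp
  · refine ⟨w.1 / v.1, Prod.ext ?_ ?_⟩ <;> simp [Prod.smul_def, smul_eq_mul]
    · field_simp
    · field_simp
      nlinarith [h]

lemma collinear_of_cross {A B C : ℝ × ℝ} (h : cross (B - A) (C - A) = 0) :
    Collinear ℝ ({A, B, C} : Set (ℝ × ℝ)) := by
  by_cases hAB : B - A = 0
  · rw [collinear_iff_of_mem (Set.mem_insert A _)]
    refine ⟨C - A, ?_⟩
    rintro p (rfl | rfl | rfl)
    · exact ⟨0, by simp⟩
    · exact ⟨0, by simp [sub_eq_zero.mp hAB]⟩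
    · exact ⟨1, by simp⟩
  · obtain ⟨c, hc⟩ := smul_of_cross hAB h
    rw [collinear_iff_of_mem (Set.mem_insert A _)]
    refine ⟨B - A, ?_⟩
    rintro p (rfl | rfl | rfl)
    · exact ⟨0, by simp⟩
    · exact ⟨1, by simp⟩
    · exact ⟨c, by rw [← hc]; simp⟩

lemma quad_three_roots {a b c t1 t2 t3 : ℝ} (h12 : t1 ≠ t2) (h13 : t1 ≠ t3) (h23 : t2 ≠ t3)
    (e1 : a * t1 ^ 2 + b * t1 + c = 0) (e2 : a * t2 ^ 2 + b * t2 + c = 0)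
    (e3 : a * t3 ^ 2 + b * t3 + c = 0) : a = 0 ∧ b = 0 ∧ c = 0 := by
  have d12 := sub_ne_zero.mpr h12
  have d13 := sub_ne_zero.mpr h13
  have d23 := sub_ne_zero.mpr h23
  have ha : a = 0 := by
    have h : a * ((t1 - t2) * (t1 - t3) * (t2 - t3)) = 0 := by
      linear_combination (t2 - t3) * e1 - (t1 - t3) * e2 + (t1 - t2) * e3
    exact (mul_eq_zero.mp h).resolve_right (mul_ne_zero (mul_ne_zero d12 d13) d23)
  have hb : b = 0 := by
    have h : b * (t1 - t2) = 0 := by linear_combination e1 - e2 - (t1 + t2) * (t1 - t2) * ha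
    exact (mul_eq_zero.mp h).resolve_right d12
  exact ⟨ha, hb, by linear_combination e1 - t1 ^ 2 * ha - t1 * hb⟩

lemma mem_span_pair {P Q R : ℝ × ℝ} (h : R ∈ affineSpan ℝ ({P, Q} : Set (ℝ × ℝ))) :
    ∃ t : ℝ, R = P + t • (Q - P) := by
  have : (R - P) +ᵥ P ∈ line[ℝ, P, Q] := by simpa using h
  obtain ⟨r, hr⟩ := vadd_left_mem_affineSpan_pair.mp this
  exact ⟨r, by simp at hr ⊢; linear_combination -hr⟩

lemma eq_param {M u : ℝ × ℝ} (hu : u ≠ 0) {t t' : ℝ} (h : M + t • u = M + t' • u) : t = t' := by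
  have e1 : t = t' ∨ u.1 = 0 := by
    have := congrArg Prod.fst h; simpa [Prod.smul_def, smul_eq_mul] using this
  have e2 : t = t' ∨ u.2 = 0 := by
    have := congrArg Prod.snd h; simpa [Prod.smul_def, smul_eq_mul] using this
  rcases e1 with h1 | h1
  · exact h1
  · rcases e2 with h2 | h2
    · exact h2
    · exact absurd (Prod.ext h1 h2) hu

end Butterfly

set_option maxHeartbeats 1000000 in
open Butterfly in
/-- **The diagonal-point butterfly configuration.** Let `M` be a diagonal point of
the quadrangle `ABCD` (on both lines `AC` and `BD`) and let `ℓ` be a line through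
`M` avoiding the four base points such that the opposite sides `AB` and `CD` cut
`ℓ` in two points `X ≠ Y` symmetric about `M`. Then every conic through the four
base points meets `ℓ` either not at all, or exactly at `M`, or exactly in a pair
of distinct points whose midpoint is `M`. -/
theorem diagonal_point_butterfly
    (A B C D : ℝ × ℝ) (hgen : NoThreeCollinear A B C D)
    (M : ℝ × ℝ)
    (hMAC : M ∈ affineSpan ℝ ({A, C} : Set (ℝ × ℝ)))
    (hMBD : M ∈ affineSpan ℝ ({B, D} : Set (ℝ × ℝ)))
    (u : ℝ × ℝ) (hu : u ≠ 0)
    (hAl : A ∉ parmLine M u) (hBl : B ∉ parmLine M u)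
    (hCl : C ∉ parmLine M u) (hDl : D ∉ parmLine M u)
    (X Y : ℝ × ℝ)
    (hXAB : X ∈ affineSpan ℝ ({A, B} : Set (ℝ × ℝ))) (hXl : X ∈ parmLine M u)
    (hYCD : Y ∈ affineSpan ℝ ({C, D} : Set (ℝ × ℝ))) (hYl : Y ∈ parmLine M u)
    (hXY : X ≠ Y) (hmid : M = midpoint ℝ X Y) :
    ∀ f : Conic, f.Nonzero → f.Through A B C D →
      {p ∈ parmLine M u | f.eval p = 0} = ∅ ∨
      {p ∈ parmLine M u | f.eval p = 0} = {M} ∨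
      ∃ X' Y' : ℝ × ℝ, X' ≠ Y' ∧ M = midpoint ℝ X' Y' ∧
        {p ∈ parmLine M u | f.eval p = 0} = {X', Y'} := by
  intro f hf hthrough
  obtain ⟨hABC, hABD, hACD, hBCD⟩ := hgen
  obtain ⟨fA, fB, fC, fD⟩ := hthrough
  obtain ⟨tM, htM⟩ := mem_span_pair hMAC
  obtain ⟨sM, hsM⟩ := mem_span_pair hMBD
  obtain ⟨tX, htX⟩ := mem_span_pair hXAB
  obtain ⟨tY, htY⟩ := mem_span_pair hYCD
  obtain ⟨s, hs⟩ := hXl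
  obtain ⟨s', hs'⟩ := hYl
  -- basic distinctness
  have hABne : A ≠ B := fun h => hABC (collinear_of_cross (by rw [h]; simp [cross]))
  have hACne : A ≠ C := fun h => hABC (collinear_of_cross (by rw [h]; simp [cross]))
  have hBDne : B ≠ D := fun h => hABD (collinear_of_cross (by rw [h]; unfold cross; ring))
  have hCDne : C ≠ D := fun h => hACD (collinear_of_cross (by rw [h]; unfold cross; ring))
  -- s' = -s and s ≠ 0
  have hsum' : (M + s • u) + (M + s' • u) = M + M := by
    rw [← hs, ← hs', hmid]; exact (midpoint_add_self ℝ X Y).symm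
  have hss' : s' = -s := by
    have e1 := congrArg Prod.fst hsum'
    have e2 := congrArg Prod.snd hsum'
    simp only [Prod.fst_add, Prod.snd_add, Prod.smul_fst, Prod.smul_snd, smul_eq_mul] at e1 e2
    have hvec : M + (s + s') • u = M + (0 : ℝ) • u := by
      apply Prod.ext <;>
        simp only [Prod.fst_add, Prod.snd_add, Prod.smul_fst, Prod.smul_snd, smul_eq_mul]
      · linear_combination e1
      · linear_combination e2
    have := eq_param hu hvec
    linarith
  have hsne : s ≠ 0 := by
    intro h0
    apply hXY
    rw [hs, hs', hss', h0]
    norm_num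
  -- the parameters tX, tY avoid 0 and 1
  have htX0 : tX ≠ 0 := by
    intro h0
    have hXA : X = A := by rw [htX, h0]; simp
    exact hAl ⟨s, by rw [← hXA]; exact hs⟩
  have htX1 : tX ≠ 1 := by
    intro h1
    have hXB : X = B := by rw [htX, h1, one_smul]; abel
    exact hBl ⟨s, by rw [← hXB]; exact hs⟩
  have htY0 : tY ≠ 0 := by
    intro h0
    have hYC : Y = C := by rw [htY, h0]; simp
    exact hCl ⟨s', by rw [← hYC]; exact hs'⟩
  have htY1 : tY ≠ 1 := by
    intro h1
    have hYD : Y = D := by rw [htY, h1, one_smul]; abel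
    exact hDl ⟨s', by rw [← hYD]; exact hs'⟩
  -- nondegeneracy of the two diagonal lines against ℓ
  set k1 := cross u (C - A) with hk1def
  set k2 := cross u (D - B) with hk2def
  have hk1 : k1 ≠ 0 := by
    intro hk
    rw [hk1def] at hk
    have hCA : C - A ≠ 0 := sub_ne_zero.mpr (Ne.symm hACne)
    have hcr : cross (C - A) u = 0 := by unfold cross at hk ⊢; linarith
    obtain ⟨c, hc⟩ := smul_of_cross hCA hcr
    have hcne : c ≠ 0 := by intro h0; apply hu; rw [hc, h0, zero_smul]
    apply hAl
    refine ⟨-tM / c, ?_⟩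
    rw [hc, smul_smul, div_mul_cancel₀ _ hcne, htM, neg_smul]
    abel
  have hk2 : k2 ≠ 0 := by
    intro hk
    rw [hk2def] at hk
    have hDB : D - B ≠ 0 := sub_ne_zero.mpr (Ne.symm hBDne)
    have hcr : cross (D - B) u = 0 := by unfold cross at hk ⊢; linarith
    obtain ⟨c, hc⟩ := smul_of_cross hDB hcr
    have hcne : c ≠ 0 := by intro h0; apply hu; rw [hc, h0, zero_smul]
    apply hBl
    refine ⟨-sM / c, ?_⟩
    rw [hc, smul_smul, div_mul_cancel₀ _ hcne, hsM, neg_smul]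
    abel
  have hQne : s * k1 * (s * k2) ≠ 0 := mul_ne_zero (mul_ne_zero hsne hk1) (mul_ne_zero hsne hk2)
  -- the auxiliary degenerate conic through A,B,C,D : the pair of lines AC, BD
  set lam := f.eval X / (s * k1 * (s * k2)) with hlamdef
  set H : (ℝ × ℝ) → ℝ :=
    fun p => f.eval p - lam * (cross (p - A) (C - A) * cross (p - B) (D - B)) with hHdef
  have hXk1 : cross (X - A) (C - A) = s * k1 := by
    rw [hs, htM, hk1def]; simp [cross, Prod.smul_def, smul_eq_mul]; ring
  have hXk2 : cross (X - B) (D - B) = s * k2 := by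
    rw [hs, hsM, hk2def]; simp [cross, Prod.smul_def, smul_eq_mul]; ring
  have hYk1 : cross (Y - A) (C - A) = -s * k1 := by
    rw [hs', hss', htM, hk1def]; simp [cross, Prod.smul_def, smul_eq_mul]; ring
  have hYk2 : cross (Y - B) (D - B) = -s * k2 := by
    rw [hs', hss', hsM, hk2def]; simp [cross, Prod.smul_def, smul_eq_mul]; ring
  have hcAA : cross (A - A) (C - A) = 0 := by unfold cross; simp
  have hcBB : cross (B - B) (D - B) = 0 := by unfold cross; simp
  have hcCC : cross (C - A) (C - A) = 0 := by unfold cross; ring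
  have hcDD : cross (D - B) (D - B) = 0 := by unfold cross; ring
  have hHA : H A = 0 := by simp only [hHdef]; rw [fA, hcAA]; ring
  have hHB : H B = 0 := by simp only [hHdef]; rw [fB, hcBB]; ring
  have hHC : H C = 0 := by simp only [hHdef]; rw [fC, hcCC]; ring
  have hHD : H D = 0 := by simp only [hHdef]; rw [fD, hcDD]; ring
  have hHX : H X = 0 := by
    simp only [hHdef]
    rw [hXk1, hXk2, hlamdef, div_mul_cancel₀ _ hQne, sub_self]
  -- the restriction of H to an arbitrary line is an explicit quadratic
  have hHline : ∀ (P vd : ℝ × ℝ) (t : ℝ), H (P + t • vd) =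
      (qc f vd - lam * (cross vd (C - A) * cross vd (D - B))) * t ^ 2
      + (lc f P vd - lam * (cross (P - A) (C - A) * cross vd (D - B)
          + cross (P - B) (D - B) * cross vd (C - A))) * t + H P := by
    intro P vd t
    simp only [hHdef]
    rw [evalLine]
    simp [cross, qc, lc, Prod.smul_def, smul_eq_mul]
    ring
  have hB1 : A + (1 : ℝ) • (B - A) = B := by rw [one_smul]; abel
  have hC1 : A + (1 : ℝ) • (C - A) = C := by rw [one_smul]; abel
  have hD1 : C + (1 : ℝ) • (D - C) = D := by rw [one_smul]; abel
  have hA0 : A + (0 : ℝ) • (B - A) = A := by simp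
  have hC0 : C + (0 : ℝ) • (D - C) = C := by simp
  -- H vanishes identically on line AB
  have e1 := hHline A (B - A) 0
  rw [hA0, hHA] at e1
  have e2 := hHline A (B - A) 1
  rw [hB1, hHB, hHA] at e2
  have e3 := hHline A (B - A) tX
  rw [← htX, hHX, hHA] at e3
  obtain ⟨hQAB, hLAB, -⟩ := quad_three_roots zero_ne_one (Ne.symm htX0) (Ne.symm htX1)
    e1.symm e2.symm e3.symm
  -- H vanishes at Y
  have hHY : H Y = 0 := by
    by_cases hpar : cross (B - A) (D - C) = 0
    · obtain ⟨c, hc⟩ := smul_of_cross (sub_ne_zero.mpr (Ne.symm hABne)) hpar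
      have hQCD : qc f (D - C) - lam * (cross (D - C) (C - A) * cross (D - C) (D - B))
          = c ^ 2 * (qc f (B - A) - lam * (cross (B - A) (C - A) * cross (B - A) (D - B))) := by
        rw [hc]; simp [qc, cross, Prod.smul_def, smul_eq_mul]; ring
      have hQCD0 : qc f (D - C) - lam * (cross (D - C) (C - A) * cross (D - C) (D - B)) = 0 := by
        rw [hQCD, hQAB]; ring
      have e4 := hHline C (D - C) 1
      rw [hD1, hHD, hHC] at e4
      have hLCD : lc f C (D - C) - lam * (cross (C - A) (C - A) * cross (D - C) (D - B)
          + cross (C - B) (D - B) * cross (D - C) (C - A)) = 0 := by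
        rw [hQCD0] at e4; linarith
      have e5 := hHline C (D - C) tY
      rw [← htY, hHC] at e5
      rw [e5, hQCD0, hLCD]; ring
    · have hδ2 : cross (B - A) (D - C) ≠ 0 := hpar
      set tz := cross (C - A) (D - C) / cross (B - A) (D - C) with htzdef
      set sz := -(cross (B - A) (C - A)) / cross (B - A) (D - C) with hszdef
      have hpar' : (B.1 - A.1) * (D.2 - C.2) - (B.2 - A.2) * (D.1 - C.1) ≠ 0 := by
        unfold cross at hpar; simpa using hpar
      have hZ : A + tz • (B - A) = C + sz • (D - C) := by
        rw [htzdef, hszdef]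
        apply Prod.ext <;>
          simp only [cross, Prod.fst_add, Prod.snd_add, Prod.smul_fst, Prod.smul_snd,
            Prod.fst_sub, Prod.snd_sub, smul_eq_mul]
        · linear_combination (C.1 - A.1) * mul_inv_cancel₀ hpar'
        · linear_combination (C.2 - A.2) * mul_inv_cancel₀ hpar'
      have hHZ : H (A + tz • (B - A)) = 0 := by
        rw [hHline, hQAB, hLAB, hHA]; ring
      have hszne : sz ≠ 0 := by
        intro h0
        rw [hszdef] at h0
        rcases div_eq_zero_iff.mp h0 with h | h
        · exact hABC (collinear_of_cross (by linarith))
        · exact hδ2 h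
      have hszne1 : sz ≠ 1 := by
        intro h1
        have hD2 : A + tz • (B - A) = D := by rw [hZ, h1, one_smul]; abel
        have ecr : cross (B - A) (D - A) = 0 := by
          have e1' := congrArg Prod.fst hD2
          have e2' := congrArg Prod.snd hD2
          simp only [Prod.fst_add, Prod.snd_add, Prod.smul_fst, Prod.smul_snd,
            Prod.fst_sub, Prod.snd_sub, smul_eq_mul] at e1' e2'
          simp only [cross, Prod.fst_sub, Prod.snd_sub]
          linear_combination (B.2 - A.2) * e1' - (B.1 - A.1) * e2'
        exact hABD (collinear_of_cross ecr)
      have e4 := hHline C (D - C) 0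
      rw [hC0, hHC] at e4
      have e5 := hHline C (D - C) 1
      rw [hD1, hHD, hHC] at e5
      have e6 := hHline C (D - C) sz
      rw [← hZ, hHZ, hHC] at e6
      obtain ⟨hQCD0, hLCD0, -⟩ := quad_three_roots zero_ne_one (Ne.symm hszne) (Ne.symm hszne1)
        e4.symm e5.symm e6.symm
      have e7 := hHline C (D - C) tY
      rw [← htY, hHC] at e7
      rw [e7, hQCD0, hLCD0]; ring
  -- conclude the middle coefficient vanishes
  have hfY : f.eval Y = lam * (s * k1 * (s * k2)) := by
    have h := hHY
    simp only [hHdef] at h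
    rw [hYk1, hYk2] at h
    linear_combination h
  have hfX : f.eval X = lam * (s * k1 * (s * k2)) := by
    rw [hlamdef, div_mul_cancel₀ _ hQne]
  have hβ : lc f M u = 0 := by
    have eX : f.eval X = qc f u * s ^ 2 + lc f M u * s + f.eval M := by
      rw [hs]; exact evalLine f M u s
    have eY : f.eval Y = qc f u * s ^ 2 + lc f M u * (-s) + f.eval M := by
      rw [hs', hss', evalLine]; ring
    have h2s : lc f M u * (2 * s) = 0 := by linear_combination eY - eX + hfX - hfY
    rcases mul_eq_zero.mp h2s with h | h
    · exact h
    · exact absurd (by linarith : s = 0) hsne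
  -- membership characterization
  have hmem : ∀ p : ℝ × ℝ, p ∈ {p ∈ parmLine M u | f.eval p = 0} ↔
      ∃ t : ℝ, p = M + t • u ∧ qc f u * t ^ 2 + f.eval M = 0 := by
    intro p
    simp only [Set.mem_setOf_eq, parmLine]
    constructor
    · rintro ⟨⟨t, rfl⟩, hfp⟩
      refine ⟨t, rfl, ?_⟩
      rw [evalLine, hβ] at hfp
      linarith
    · rintro ⟨t, rfl, h⟩
      refine ⟨⟨t, rfl⟩, ?_⟩
      rw [evalLine, hβ]
      linarith
  clear hHline hHY hHA hHB hHC hHD hHX hQAB hLAB e1 e2 e3 hfX hfY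
  clear_value H lam
  clear H hHdef hlamdef lam hXk1 hXk2 hYk1 hYk2 hQne hcAA hcBB hcCC hcDD
  clear_value k1 k2
  clear hk1 hk2 hk1def hk2def k1 k2 hsum'
  by_cases hα : qc f u = 0
  · by_cases hγ : f.eval M = 0
    · -- degenerate case : f vanishes on the whole line, contradiction
      exfalso
      have hfX0 : f.eval X = 0 := by
        rw [hs, evalLine, hα, hβ, hγ]; ring
      -- f vanishes on line AB
      have g1 : qc f (B - A) * (0 : ℝ) ^ 2 + lc f A (B - A) * 0 + f.eval A = 0 := by
        rw [fA]; ring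
      have g2 : qc f (B - A) * (1 : ℝ) ^ 2 + lc f A (B - A) * 1 + f.eval A = 0 := by
        have h := evalLine f A (B - A) 1
        rw [hB1, fB] at h
        linarith
      have g3 : qc f (B - A) * tX ^ 2 + lc f A (B - A) * tX + f.eval A = 0 := by
        have h := evalLine f A (B - A) tX
        rw [← htX, hfX0] at h
        linarith
      obtain ⟨hQv, hLv, -⟩ := quad_three_roots zero_ne_one (Ne.symm htX0) (Ne.symm htX1) g1 g2 g3
      -- f vanishes on line AC
      have htM0 : tM ≠ 0 := by
        intro h0
        have hMA : M = A := by rw [htM, h0]; simp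
        exact hAl ⟨0, by rw [← hMA]; simp⟩
      have htM1 : tM ≠ 1 := by
        intro h1
        have hMC : M = C := by rw [htM, h1, one_smul]; abel
        exact hCl ⟨0, by rw [← hMC]; simp⟩
      have g4 : qc f (C - A) * (0 : ℝ) ^ 2 + lc f A (C - A) * 0 + f.eval A = 0 := by
        rw [fA]; ring
      have g5 : qc f (C - A) * (1 : ℝ) ^ 2 + lc f A (C - A) * 1 + f.eval A = 0 := by
        have h := evalLine f A (C - A) 1
        rw [hC1, fC] at h
        linarith
      have g6 : qc f (C - A) * tM ^ 2 + lc f A (C - A) * tM + f.eval A = 0 := by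
        have h := evalLine f A (C - A) tM
        rw [← htM, hγ] at h
        linarith
      obtain ⟨hQw, hLw, -⟩ := quad_three_roots zero_ne_one (Ne.symm htM0) (Ne.symm htM1) g4 g5 g6
      -- D decomposes in the basis (C-A, B-A) with nonzero coefficients
      have hδ : cross (B - A) (C - A) ≠ 0 := fun h => hABC (collinear_of_cross h)
      have hδ' : (B.1 - A.1) * (C.2 - A.2) - (B.2 - A.2) * (C.1 - A.1) ≠ 0 := by
        unfold cross at hδ; simpa using hδ
      have hDdec : D = A + (cross (B - A) (D - A) / cross (B - A) (C - A)) • (C - A)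
          + (cross (D - A) (C - A) / cross (B - A) (C - A)) • (B - A) := by
        apply Prod.ext <;>
          simp only [cross, Prod.fst_add, Prod.snd_add, Prod.smul_fst, Prod.smul_snd,
            Prod.fst_sub, Prod.snd_sub, smul_eq_mul] <;>
          field_simp <;> ring
      have hσD : cross (B - A) (D - A) / cross (B - A) (C - A) ≠ 0 := by
        intro h0
        rcases div_eq_zero_iff.mp h0 with h | h
        · exact hABD (collinear_of_cross h)
        · exact hδ h
      have hτD : cross (D - A) (C - A) / cross (B - A) (C - A) ≠ 0 := by
        intro h0
        rcases div_eq_zero_iff.mp h0 with h | h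
        · exact hACD (collinear_of_cross (by unfold cross at h ⊢; linarith))
        · exact hδ h
      have hmc0 : mc f (C - A) (B - A) = 0 := by
        have h := evalPlane f A (C - A) (B - A)
          (cross (B - A) (D - A) / cross (B - A) (C - A))
          (cross (D - A) (C - A) / cross (B - A) (C - A))
        rw [← hDdec, fD, hQw, hQv, hLw, hLv, fA] at h
        have h2 : mc f (C - A) (B - A) * ((cross (B - A) (D - A) / cross (B - A) (C - A))
            * (cross (D - A) (C - A) / cross (B - A) (C - A))) = 0 := by
          linear_combination -h
        rcases mul_eq_zero.mp h2 with h' | h'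
        · exact h'
        · rcases mul_eq_zero.mp h' with h'' | h''
          · exact absurd h'' hσD
          · exact absurd h'' hτD
      have hall : ∀ p : ℝ × ℝ, f.eval p = 0 := by
        intro p
        have hdec : p = A + (cross (B - A) (p - A) / cross (B - A) (C - A)) • (C - A)
            + (cross (p - A) (C - A) / cross (B - A) (C - A)) • (B - A) := by
          apply Prod.ext <;>
            simp only [cross, Prod.fst_add, Prod.snd_add, Prod.smul_fst, Prod.smul_snd,
              Prod.fst_sub, Prod.snd_sub, smul_eq_mul] <;>
            field_simp <;> ring
        rw [hdec, evalPlane, hQw, hQv, hLw, hLv, fA, hmc0]; ring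
      apply hf
      have h1 := hall (0, 0)
      have h2 := hall (1, 0)
      have h3 := hall (-1, 0)
      have h4 := hall (0, 1)
      have h5 := hall (0, -1)
      have h6 := hall (1, 1)
      simp [Conic.eval] at h1 h2 h3 h4 h5 h6
      refine ⟨by linarith, by linarith, by linarith, by linarith, by linarith, by linarith⟩
    · -- empty intersection
      left
      ext p
      simp only [Set.mem_empty_iff_false, iff_false]
      intro hp
      obtain ⟨t, rfl, h⟩ := (hmem _).mp hp
      rw [hα] at h
      apply hγ
      linarith
  · by_cases hγ : f.eval M = 0
    · -- intersection exactly {M}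
      right; left
      ext p
      rw [Set.mem_singleton_iff, hmem p]
      constructor
      · rintro ⟨t, rfl, h⟩
        rw [hγ] at h
        have ht : t = 0 := by
          have h' : qc f u * t ^ 2 = 0 := by linarith
          rcases mul_eq_zero.mp h' with h'' | h''
          · exact absurd h'' hα
          · exact (pow_eq_zero_iff (Nat.succ_ne_zero 1)).mp h''
        rw [ht]; simp
      · intro hp
        exact ⟨0, by rw [hp]; simp, by rw [hγ]; ring⟩
    · have hαγ : qc f u * f.eval M ≠ 0 := mul_ne_zero hα hγ
      rcases lt_or_gt_of_ne hαγ with hneg | hpos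
      · -- two symmetric intersection points
        right; right
        have hratio : 0 < -f.eval M / qc f u := by
          rcases lt_trichotomy (qc f u) 0 with h | h | h
          · rw [div_pos_iff]; right; constructor <;> nlinarith
          · exact absurd h hα
          · rw [div_pos_iff]; left; constructor <;> nlinarith
        set r := Real.sqrt (-f.eval M / qc f u) with hrdef
        have hr2 : r ^ 2 = -f.eval M / qc f u := Real.sq_sqrt (le_of_lt hratio)
        have hrpos : 0 < r := Real.sqrt_pos.mpr hratio
        have hkey : ∀ t : ℝ, qc f u * t ^ 2 + f.eval M = 0 ↔ t = r ∨ t = -r := by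
          intro t
          have hαr : qc f u * r ^ 2 = -f.eval M := by
            rw [hr2, mul_comm, div_mul_cancel₀ _ hα]
          have expand : qc f u * t ^ 2 + f.eval M = qc f u * ((t - r) * (t + r)) := by
            linear_combination hαr
          constructor
          · intro h
            have h' : (t - r) * (t + r) = 0 := by
              rcases mul_eq_zero.mp (by rw [← expand]; exact h) with h'' | h''
              · exact absurd h'' hα
              · exact h''
            rcases mul_eq_zero.mp h' with h'' | h''
            · left; linarith [sub_eq_zero.mp h'']
            · right; linarith [h'']
          · rintro (rfl | rfl) <;> rw [expand] <;> ring
        refine ⟨M + r • u, M + (-r) • u, ?_, ?_, ?_⟩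
        · intro h
          have := eq_param hu h
          linarith
        · rw [midpoint_eq_smul_add]
          have hsum2 : (M + r • u) + (M + (-r) • u) = M + M := by
            rw [neg_smul]; abel
          rw [hsum2, ← two_smul ℝ M, smul_smul, invOf_eq_inv]
          norm_num
        · ext p
          rw [hmem p, Set.mem_insert_iff, Set.mem_singleton_iff]
          constructor
          · rintro ⟨t, rfl, h⟩
            rcases (hkey t).mp h with rfl | rfl
            · left; rfl
            · right; rfl
          · rintro (rfl | rfl)
            · exact ⟨r, rfl, (hkey r).mpr (Or.inl rfl)⟩
            · exact ⟨-r, rfl, (hkey (-r)).mpr (Or.inr rfl)⟩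
      · -- empty intersection
        left
        ext p
        simp only [Set.mem_empty_iff_false, iff_false]
        intro hp
        obtain ⟨t, rfl, h⟩ := (hmem _).mp hp
        have h2 : qc f u * (qc f u * t ^ 2) + qc f u * f.eval M = 0 := by
          linear_combination qc f u * h
        nlinarith [h2, hpos, sq_nonneg (qc f u * t)]
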